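/- Let $B_1, B_2$ be $N \times N$ real matrices with $B_2$ symmetric positive semidefinite, $\tau \ge 0$, $q \in \mathbb{R}^N$, and $\lambda > 0$. Then $\left|\operatorname{tr}\big(B_1\big((B_2+\lambda I)^{-1} - (B_2 + \tau q q^\top + \lambda I)^{-1}\big)\big)\right| \le \frac{\|B_1\|_{op}}{\lambda}$, where $\|\cdot\|_{op}$ denotes the operator (spectral) norm. -/

import Mathlib

open Matrix

private lemma trace_mul_vecMulVec' {N : ℕ} (Y : Matrix (Fin N) (Fin N) ℝ) (u v : Fin N → ℝ) :
    Matrix.trace (Y * vecMulVec u v) = v ⬝ᵥ (Y *ᵥ u) := by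
  simp only [Matrix.trace, Matrix.diag, Matrix.mul_apply, vecMulVec_apply, dotProduct, mulVec,
    Finset.mul_sum]
  exact Finset.sum_congr rfl fun i _ => Finset.sum_congr rfl fun j _ => by ring

private lemma vecMulVec_mulVec' {N : ℕ} (q w : Fin N → ℝ) :
    vecMulVec q q *ᵥ w = (q ⬝ᵥ w) • q := by
  ext i
  simp [vecMulVec_apply, mulVec, dotProduct, Finset.mul_sum, Finset.sum_mul, mul_comm,
    mul_left_comm]

private lemma quad_abs_le' {N : ℕ} (B₁ : Matrix (Fin N) (Fin N) ℝ) (w : Fin N → ℝ) :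
    |w ⬝ᵥ (B₁ *ᵥ w)| ≤ ‖Matrix.toEuclideanCLM (𝕜 := ℝ) B₁‖ * (w ⬝ᵥ w) := by
  set x : EuclideanSpace ℝ (Fin N) := (WithLp.equiv 2 (Fin N → ℝ)).symm w with hx
  have hinner : ∀ u v : Fin N → ℝ,
      (inner ℝ ((WithLp.equiv 2 (Fin N → ℝ)).symm u) ((WithLp.equiv 2 (Fin N → ℝ)).symm v) : ℝ)
        = u ⬝ᵥ v := by
    intro u v
    simp [PiLp.inner_apply, dotProduct, mul_comm]
  have h1 : w ⬝ᵥ (B₁ *ᵥ w) = (inner ℝ x (Matrix.toEuclideanCLM (𝕜 := ℝ) B₁ x) : ℝ) := by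
    rw [hx]; exact (hinner w (B₁ *ᵥ w)).symm
  have h2 : w ⬝ᵥ w = ‖x‖ * ‖x‖ := by
    rw [← real_inner_self_eq_norm_mul_norm, hx, hinner]
  rw [h1, h2]
  calc |(inner ℝ x (Matrix.toEuclideanCLM (𝕜 := ℝ) B₁ x) : ℝ)|
      ≤ ‖x‖ * ‖Matrix.toEuclideanCLM (𝕜 := ℝ) B₁ x‖ := abs_real_inner_le_norm _ _
    _ ≤ ‖x‖ * (‖Matrix.toEuclideanCLM (𝕜 := ℝ) B₁‖ * ‖x‖) := by
        gcongr
        exact (Matrix.toEuclideanCLM (𝕜 := ℝ) B₁).le_opNorm x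
    _ = ‖Matrix.toEuclideanCLM (𝕜 := ℝ) B₁‖ * (‖x‖ * ‖x‖) := by ring

/-- Trace bound for a rank-one perturbation of a resolvent (real version of
Bai–Silverstein Lemma 2.10): the trace of `B₁` against the difference of resolvents
is bounded by the operator norm of `B₁` divided by `λ`. -/
theorem trace_resolvent_rank_one_bound (N : ℕ)
    (B₁ B₂ : Matrix (Fin N) (Fin N) ℝ) (hB₂ : B₂.PosSemidef)
    (τ : ℝ) (hτ : 0 ≤ τ) (q : Fin N → ℝ) (l : ℝ) (hl : 0 < l) :
    |Matrix.trace (B₁ *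
        ((B₂ + l • (1 : Matrix (Fin N) (Fin N) ℝ))⁻¹ -
         (B₂ + τ • vecMulVec q q + l • (1 : Matrix (Fin N) (Fin N) ℝ))⁻¹))| ≤
      ‖Matrix.toEuclideanCLM (𝕜 := ℝ) B₁‖ / l := by
  set K := ‖Matrix.toEuclideanCLM (𝕜 := ℝ) B₁‖ with hK
  have hK0 : 0 ≤ K := norm_nonneg _
  set A : Matrix (Fin N) (Fin N) ℝ := B₂ + l • (1 : Matrix (Fin N) (Fin N) ℝ) with hAdef
  set M : Matrix (Fin N) (Fin N) ℝ :=
    B₂ + τ • vecMulVec q q + l • (1 : Matrix (Fin N) (Fin N) ℝ) with hMdef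
  -- positivity facts
  have hid : (l • (1 : Matrix (Fin N) (Fin N) ℝ)).PosDef := by
    rw [smul_one_eq_diagonal]
    exact Matrix.PosDef.diagonal (fun _ => hl)
  have hqq : (τ • vecMulVec q q : Matrix (Fin N) (Fin N) ℝ).PosSemidef := by
    refine posSemidef_iff_dotProduct_mulVec.mpr ⟨?_, ?_⟩
    · ext i j
      simp [conjTranspose_apply, vecMulVec_apply, mul_comm]
    · intro x
      have : (τ • vecMulVec q q : Matrix (Fin N) (Fin N) ℝ) *ᵥ x
          = τ • ((q ⬝ᵥ x) • q) := by
        rw [smul_mulVec, vecMulVec_mulVec']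
      rw [this]
      have hsx : star x = x := by ext i; simp
      rw [hsx]
      have : x ⬝ᵥ (τ • ((q ⬝ᵥ x) • q)) = τ * ((q ⬝ᵥ x) * (x ⬝ᵥ q)) := by
        simp [dotProduct_smul, smul_eq_mul, mul_assoc]
      rw [this, dotProduct_comm x q]
      exact mul_nonneg hτ (mul_self_nonneg _)
  have hA : A.PosDef := Matrix.PosDef.posSemidef_add hB₂ hid
  have hM : M.PosDef := Matrix.PosDef.posSemidef_add (hB₂.add hqq) hid
  have hAdet : IsUnit A.det := hA.det_pos.ne'.isUnit
  have hMdet : IsUnit M.det := hM.det_pos.ne'.isUnit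
  -- the vector w and scalars
  set w : Fin N → ℝ := A⁻¹ *ᵥ q with hw
  set c : ℝ := q ⬝ᵥ w with hc
  set n2 : ℝ := w ⬝ᵥ w with hn2
  have hn2nonneg : 0 ≤ n2 := by
    simp only [hn2, dotProduct]
    exact Finset.sum_nonneg fun i _ => mul_self_nonneg _
  have hAw : A *ᵥ w = q := by
    rw [hw, mulVec_mulVec, Matrix.mul_nonsing_inv _ hAdet, one_mulVec]
  -- c ≥ l * n2
  have hcl : l * n2 ≤ c := by
    have h1 : c = w ⬝ᵥ (A *ᵥ w) := by
      rw [hc, ← hAw, dotProduct_comm]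
    have h2 : w ⬝ᵥ (A *ᵥ w) = w ⬝ᵥ (B₂ *ᵥ w) + l * n2 := by
      rw [hAdef, add_mulVec, dotProduct_add, smul_mulVec, one_mulVec, dotProduct_smul,
        smul_eq_mul, hn2]
    have h3 : 0 ≤ w ⬝ᵥ (B₂ *ᵥ w) := by
      have := hB₂.dotProduct_mulVec_nonneg w
      have hsw : star w = w := by ext i; simp
      rwa [hsw] at this
    rw [h1, h2]; linarith
  have hc0 : 0 ≤ c := le_trans (by positivity) hcl
  set s : ℝ := 1 + τ * c with hs
  have hs0 : 0 < s := by rw [hs]; positivity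
  -- resolvent difference identity
  have hMA : M = A + τ • vecMulVec q q := by
    rw [hMdef, hAdef]; abel
  have hdiff : A⁻¹ - M⁻¹ = A⁻¹ * (τ • vecMulVec q q) * M⁻¹ := by
    have h1 : A⁻¹ * (τ • vecMulVec q q) * M⁻¹ = A⁻¹ * (M - A) * M⁻¹ := by
      rw [hMA]; congr 1; congr 1; abel
    have h2 : A⁻¹ * (M - A) * M⁻¹ = A⁻¹ * (M * M⁻¹) - (A⁻¹ * A) * M⁻¹ := by
      noncomm_ring
    rw [h1, h2, Matrix.mul_nonsing_inv _ hMdet, Matrix.nonsing_inv_mul _ hAdet, mul_one, one_mul]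
  -- compute the trace
  have hMsymm : (M⁻¹)ᵀ = M⁻¹ := by
    have h := hM.inv.isHermitian
    have : (M⁻¹)ᴴ = (M⁻¹)ᵀ := by ext i j; simp [conjTranspose_apply]
    rw [← this, h]
  have hdot : ∀ y : Fin N → ℝ, q ⬝ᵥ (M⁻¹ *ᵥ y) = (M⁻¹ *ᵥ q) ⬝ᵥ y := by
    intro y
    rw [dotProduct_mulVec, ← mulVec_transpose, hMsymm]
  have htrace : Matrix.trace (B₁ * (A⁻¹ - M⁻¹))
      = τ * ((M⁻¹ *ᵥ q) ⬝ᵥ (B₁ *ᵥ w)) := by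
    rw [hdiff]
    have h2 : Matrix.trace (B₁ * (A⁻¹ * (τ • vecMulVec q q) * M⁻¹))
        = Matrix.trace (τ • ((M⁻¹ * B₁ * A⁻¹) * vecMulVec q q)) := by
      have : B₁ * (A⁻¹ * (τ • vecMulVec q q) * M⁻¹)
          = (B₁ * A⁻¹ * (τ • vecMulVec q q)) * M⁻¹ := by noncomm_ring
      rw [this, Matrix.trace_mul_comm]
      congr 1
      simp only [Matrix.mul_smul, Matrix.smul_mul, Matrix.mul_assoc]
    rw [h2, Matrix.trace_smul, trace_mul_vecMulVec', smul_eq_mul]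
    congr 1
    have h3 : (M⁻¹ * B₁ * A⁻¹) *ᵥ q = M⁻¹ *ᵥ (B₁ *ᵥ w) := by
      rw [hw, mulVec_mulVec, mulVec_mulVec, Matrix.mul_assoc]
    rw [h3, hdot]
  -- Sherman–Morrison: M⁻¹ q = s⁻¹ • w
  have hMw : M *ᵥ w = s • q := by
    rw [hMA, add_mulVec, hAw, smul_mulVec, vecMulVec_mulVec', ← hc, hs]
    ext i
    simp only [Pi.add_apply, Pi.smul_apply, smul_eq_mul]
    ring
  have hv : M⁻¹ *ᵥ q = s⁻¹ • w := by
    have h1 : M⁻¹ *ᵥ (M *ᵥ w) = w := by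
      rw [mulVec_mulVec, Matrix.nonsing_inv_mul _ hMdet, one_mulVec]
    rw [hMw, mulVec_smul] at h1
    rw [← h1, smul_smul, inv_mul_cancel₀ hs0.ne', one_smul]
  -- final estimate
  rw [htrace, hv, smul_dotProduct, smul_eq_mul, ← mul_assoc, abs_mul]
  have habs : |w ⬝ᵥ (B₁ *ᵥ w)| ≤ K * n2 := quad_abs_le' B₁ w
  have h4 : |τ * s⁻¹| = τ / s := by
    rw [abs_of_nonneg (by positivity), div_eq_mul_inv]
  rw [h4]
  calc τ / s * |w ⬝ᵥ (B₁ *ᵥ w)| ≤ τ / s * (K * n2) := by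
        apply mul_le_mul_of_nonneg_left habs (by positivity)
    _ = (τ * n2 * K) / s := by ring
    _ ≤ K / l := by
        rw [div_le_div_iff₀ hs0 hl]
        nlinarith [mul_nonneg (mul_nonneg hK0 hτ) (sub_nonneg.2 hcl)]
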